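/- arXiv:2410.24145 — 5 statements merged into one kernel-verified Lean document; each statement's English description precedes it below -/
import Mathlib

section
/- Let (R_1, …, R_{n+1}) be an exchangeable random vector of real-valued random variables, and for k ∈ {1, …, n+1} let R_{(k)} denote the k-th order statistic of (R_1, …, R_{n+1}). Then for every k ∈ {1, …, n+1}, P(R_{n+1} ≤ R_{(k)}) ≥ k/(n+1). -/
open MeasureTheory

/-- The `k`-th order statistic (0-indexed) of the tuple `f : Fin m → ℝ`. -/
noncomputable def orderStat {m : ℕ} (f : Fin m → ℝ) (k : Fin m) : ℝ :=
  f (Tuple.sort f k)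

/-- A random vector `R` is exchangeable if every permutation of its components
has the same joint distribution as the original. -/
def Exchangeable {Ω : Type*} [MeasurableSpace Ω] (P : Measure Ω) {m : ℕ}
    (R : Ω → Fin m → ℝ) : Prop :=
  ∀ π : Equiv.Perm (Fin m), Measure.map (fun ω => R ω ∘ π) P = Measure.map R P

lemma orderStat_comp {m : ℕ} (f : Fin m → ℝ) (π : Equiv.Perm (Fin m)) (k : Fin m) :
    orderStat (f ∘ π) k = orderStat f k :=
  congrFun (Tuple.comp_perm_comp_sort_eq_comp_sort (f := f) (σ := π)) k

lemma orderStat_le_iff {m : ℕ} (g : Fin m → ℝ) (k : Fin m) (a : ℝ) :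
    orderStat g k ≤ a ↔ (k : ℕ) < (Finset.univ.filter fun i => g i ≤ a).card := by
  have h := Tuple.lt_card_le_iff_apply_le_of_monotone (f := g ∘ Tuple.sort g) (a := a)
    (Tuple.monotone_sort g) (j := k)
  rw [← Fintype.card_subtype] at h
  have hc : Fintype.card {i // (g ∘ Tuple.sort g) i ≤ a} = Fintype.card {i // g i ≤ a} :=
    Fintype.card_congr ((Tuple.sort g).subtypeEquiv (fun i => Iff.rfl))
  rw [hc] at h
  rw [orderStat]
  simp only [Function.comp_apply] at h
  rw [← h, Fintype.card_subtype]

lemma orderStat_le_iff' {m : ℕ} (g : Fin m → ℝ) (k : Fin m) (a : ℝ) :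
    orderStat g k ≤ a ↔ ∃ s : Finset (Fin m), s.card = (k : ℕ) + 1 ∧ ∀ i ∈ s, g i ≤ a := by
  rw [orderStat_le_iff, Nat.lt_iff_add_one_le]
  constructor
  · intro h
    obtain ⟨t, hts, htc⟩ := Finset.exists_subset_card_eq h
    exact ⟨t, htc, fun i hi => (Finset.mem_filter.1 (hts hi)).2⟩
  · rintro ⟨s, hsc, hs⟩
    calc (k : ℕ) + 1 = s.card := hsc.symm
      _ ≤ _ := Finset.card_le_card fun i hi =>
          Finset.mem_filter.2 ⟨Finset.mem_univ i, hs i hi⟩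

lemma measurable_orderStat {m : ℕ} (k : Fin m) :
    Measurable fun g : Fin m → ℝ => orderStat g k := by
  apply measurable_of_Iic
  intro a
  have : (fun g : Fin m → ℝ => orderStat g k) ⁻¹' Set.Iic a =
      ⋃ s ∈ {s : Finset (Fin m) | s.card = (k : ℕ) + 1}, ⋂ i ∈ s, {g : Fin m → ℝ | g i ≤ a} := by
    ext g
    simp only [Set.mem_preimage, Set.mem_Iic, orderStat_le_iff', Set.mem_iUnion,
      Set.mem_iInter, Set.mem_setOf_eq]
    tauto
  rw [this]
  exact MeasurableSet.biUnion (Set.to_countable _) fun s _ =>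
    MeasurableSet.biInter (Set.to_countable _) fun i _ =>
      measurableSet_le (measurable_pi_apply i) measurable_const

lemma card_le_filter_orderStat {m : ℕ} (g : Fin m → ℝ) (k : Fin m) :
    (k : ℕ) + 1 ≤ (Finset.univ.filter fun i => g i ≤ orderStat g k).card := by
  have := (orderStat_le_iff g k (orderStat g k)).1 le_rfl
  omega

/-- For an exchangeable random vector `(R 0, …, R n)` and any `k` (0-indexed; the
1-indexed rank is `k + 1`), `P(R n ≤ R⁽ᵏ⁾) ≥ (k + 1)/(n + 1)`. -/
theorem prob_last_le_orderStat_ge {Ω : Type*} [MeasurableSpace Ω]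
    (P : Measure Ω) [IsProbabilityMeasure P] (n : ℕ) (R : Ω → Fin (n + 1) → ℝ)
    (hR : Measurable R) (hexch : Exchangeable P R) (k : Fin (n + 1)) :
    (((k : ℕ) + 1 : ℕ) : ENNReal) / ((n + 1 : ℕ) : ENNReal) ≤
      P {ω | R ω (Fin.last n) ≤ orderStat (R ω) k} := by
  set μ := Measure.map R P with hμ
  have hμprob : IsProbabilityMeasure μ := Measure.isProbabilityMeasure_map hR.aemeasurable
  set S : Fin (n + 1) → Set (Fin (n + 1) → ℝ) := fun i => {g | g i ≤ orderStat g k} with hS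
  have hSmeas : ∀ i, MeasurableSet (S i) := fun i =>
    measurableSet_le (measurable_pi_apply i) (measurable_orderStat k)
  have hPeq : P {ω | R ω (Fin.last n) ≤ orderStat (R ω) k} = μ (S (Fin.last n)) := by
    rw [hμ, Measure.map_apply hR (hSmeas _)]; rfl
  have key : ∀ i, μ (S i) = μ (S (Fin.last n)) := by
    intro i
    set π := Equiv.swap i (Fin.last n) with hπ
    have hRπ : Measurable fun ω => R ω ∘ π :=
      measurable_pi_lambda _ fun j => (measurable_pi_apply (π j)).comp hR
    have h1 : μ (S i) = P ((fun ω => R ω ∘ π) ⁻¹' S i) := by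
      rw [hμ, ← hexch π, Measure.map_apply hRπ (hSmeas i)]
    have hpre : (fun ω => R ω ∘ π) ⁻¹' S i = R ⁻¹' S (Fin.last n) := by
      ext ω
      simp only [Set.mem_preimage, hS, Set.mem_setOf_eq, Function.comp_apply]
      rw [orderStat_comp, hπ, Equiv.swap_apply_left]
    rw [h1, hpre, ← Measure.map_apply hR (hSmeas _)]
  have hsum : (((k : ℕ) + 1 : ℕ) : ENNReal) ≤ ∑ i : Fin (n + 1), μ (S i) := by
    have heq : ∑ i : Fin (n + 1), μ (S i) =
        ∫⁻ g, ∑ i : Fin (n + 1), (S i).indicator 1 g ∂μ := by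
      rw [lintegral_finset_sum _ fun i _ => measurable_one.indicator (hSmeas i)]
      exact Finset.sum_congr rfl fun i _ => (lintegral_indicator_one (hSmeas i)).symm
    rw [heq]
    calc (((k : ℕ) + 1 : ℕ) : ENNReal) = ∫⁻ _, (((k : ℕ) + 1 : ℕ) : ENNReal) ∂μ := by
          simp
      _ ≤ _ := by
          refine lintegral_mono fun g => ?_
          have hcard := card_le_filter_orderStat g k
          calc (((k : ℕ) + 1 : ℕ) : ENNReal)
              ≤ ((Finset.univ.filter fun i => g i ≤ orderStat g k).card : ENNReal) := by
                exact_mod_cast hcard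
            _ = ∑ i : Fin (n + 1), (S i).indicator 1 g := by
                rw [Finset.card_filter]
                push_cast
                refine Finset.sum_congr rfl fun i _ => ?_
                by_cases h : g i ≤ orderStat g k
                · simp [Set.indicator_apply, hS, h]
                · simp [Set.indicator_apply, hS, h]
  have hsum' : (((k : ℕ) + 1 : ℕ) : ENNReal) ≤ μ (S (Fin.last n)) * ((n + 1 : ℕ) : ENNReal) := by
    calc (((k : ℕ) + 1 : ℕ) : ENNReal) ≤ ∑ i : Fin (n + 1), μ (S i) := hsum
      _ = ∑ _i : Fin (n + 1), μ (S (Fin.last n)) := Finset.sum_congr rfl fun i _ => key i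
      _ = μ (S (Fin.last n)) * ((n + 1 : ℕ) : ENNReal) := by
          simp [Finset.sum_const, mul_comm]
  rw [hPeq]
  exact ENNReal.div_le_of_le_mul hsum'
end

section
/- Let (R_1, …, R_n, R_{n+1}) be an exchangeable random vector of real-valued random variables. Let 0 < α < 1 be such that ⌈(1-α)(n+1)⌉ ≤ n, and let r̂ denote the ⌈(1-α)(n+1)⌉-th order statistic of the first n components R_1, …, R_n. Then P(R_{n+1} ≤ r̂) ≥ 1 - α. -/
open MeasureTheory

open scoped Classical ENNReal

/-- Number of components of `f` other than `j` that are strictly below `f j`. -/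
noncomputable def cnt {m : ℕ} (f : Fin m → ℝ) (j : Fin m) : ℕ :=
  (Finset.univ.filter (fun i => i ≠ j ∧ f i < f j)).card

lemma cnt_comp {m : ℕ} (f : Fin m → ℝ) (π : Equiv.Perm (Fin m)) (j : Fin m) :
    cnt (f ∘ π) j = cnt f (π j) := by
  unfold cnt
  refine Finset.card_bij (fun i _ => π i) ?_ ?_ ?_
  · intro a ha
    simp only [Finset.mem_filter, Finset.mem_univ, true_and, Function.comp_apply] at ha ⊢
    exact ⟨fun h => ha.1 (π.injective h), ha.2⟩
  · intro a ha b hb hab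
    exact π.injective hab
  · intro b hb
    simp only [Finset.mem_filter, Finset.mem_univ, true_and, Function.comp_apply] at hb ⊢
    refine ⟨π.symm b, ⟨?_, ?_⟩, by simp⟩
    · intro h; apply hb.1; rw [← h]; simp
    · simpa using hb.2

lemma cnt_sort_le {m : ℕ} (f : Fin m → ℝ) (p : Fin m) :
    cnt f (Tuple.sort f p) ≤ (p : ℕ) := by
  unfold cnt
  have hmono := Tuple.monotone_sort f
  calc (Finset.univ.filter (fun i => i ≠ Tuple.sort f p ∧ f i < f (Tuple.sort f p))).card
      ≤ (Finset.Iio p).card := by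
        refine Finset.card_le_card_of_injOn (fun i => (Tuple.sort f).symm i) ?_ ?_
        · intro i hi
          simp only [Finset.mem_coe, Finset.mem_filter, Finset.mem_univ, true_and] at hi
          simp only [Finset.mem_coe, Finset.mem_Iio]
          by_contra hge
          push_neg at hge
          have h1 : (f ∘ Tuple.sort f) p ≤ (f ∘ Tuple.sort f) ((Tuple.sort f).symm i) :=
            hmono hge
          simp only [Function.comp_apply, Equiv.apply_symm_apply] at h1
          exact absurd hi.2 (not_lt.mpr h1)
        · exact fun a _ b _ hab => (Tuple.sort f).symm.injective hab
    _ = (p : ℕ) := Fin.card_Iio p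

lemma count_ge {m : ℕ} (f : Fin m → ℝ) (K : ℕ) (hK : K < m) :
    K + 1 ≤ (Finset.univ.filter (fun j => cnt f j ≤ K)).card := by
  have h : (Finset.Iic (⟨K, hK⟩ : Fin m)).card
      ≤ (Finset.univ.filter (fun j => cnt f j ≤ K)).card := by
    refine Finset.card_le_card_of_injOn (fun q => Tuple.sort f q) ?_ ?_
    · intro q hq
      simp only [Finset.mem_coe, Finset.mem_Iic] at hq
      simp only [Finset.mem_coe, Finset.mem_filter, Finset.mem_univ, true_and]
      exact (cnt_sort_le f q).trans hq
    · exact fun a _ b _ hab => (Tuple.sort f).injective hab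
  rwa [Fin.card_Iic] at h

lemma le_orderStat {m : ℕ} (f : Fin m → ℝ) (x : ℝ) (p : Fin m)
    (h : (Finset.univ.filter (fun i => f i < x)).card ≤ (p : ℕ)) :
    x ≤ orderStat f p := by
  by_contra hlt
  push_neg at hlt
  have hmono := Tuple.monotone_sort f
  have h2 : (Finset.Iic p).card ≤ (Finset.univ.filter (fun i => f i < x)).card := by
    refine Finset.card_le_card_of_injOn (fun q => Tuple.sort f q) ?_ ?_
    · intro q hq
      simp only [Finset.mem_coe, Finset.mem_Iic] at hq
      simp only [Finset.mem_coe, Finset.mem_filter, Finset.mem_univ, true_and]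
      have : (f ∘ Tuple.sort f) q ≤ (f ∘ Tuple.sort f) p := hmono hq
      simp only [Function.comp_apply] at this
      exact lt_of_le_of_lt this hlt
    · exact fun a _ b _ hab => (Tuple.sort f).injective hab
  rw [Fin.card_Iic] at h2
  omega

/-- Split conformal lower bound: for an exchangeable random vector
`(R 0, …, R (n-1), R n)`, a miscoverage level `0 < α < 1` with
`⌈(1 - α)(n + 1)⌉ ≤ n` (witnessed by the index `k : Fin n` with
`k + 1 = ⌈(1 - α)(n + 1)⌉`, 0-indexed), and `r̂` the `⌈(1 - α)(n + 1)⌉`-th order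
statistic of the first `n` components, we have `P(R n ≤ r̂) ≥ 1 - α`. -/
theorem split_conformal_lower_bound {Ω : Type*} [MeasurableSpace Ω]
    (P : Measure Ω) [IsProbabilityMeasure P] (n : ℕ) (R : Ω → Fin (n + 1) → ℝ)
    (hR : Measurable R) (hexch : Exchangeable P R)
    (α : ℝ) (hα0 : 0 < α) (hα1 : α < 1)
    (k : Fin n) (hk : ((k : ℕ) : ℤ) + 1 = ⌈(1 - α) * ((n : ℝ) + 1)⌉) :
    ENNReal.ofReal (1 - α) ≤
      P {ω | R ω (Fin.last n) ≤ orderStat (fun i : Fin n => R ω i.castSucc) k} := by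
  set K : ℕ := (k : ℕ) with hKdef
  set S : Fin (n + 1) → Set (Fin (n + 1) → ℝ) := fun j => {f | cnt f j ≤ K} with hSdef
  -- measurability of the sets S j
  have hSm : ∀ j, MeasurableSet (S j) := by
    intro j
    have hmeas : Measurable (fun f : Fin (n + 1) → ℝ => cnt f j) := by
      have heq : (fun f : Fin (n + 1) → ℝ => cnt f j)
          = fun f => ∑ i : Fin (n + 1), if i ≠ j ∧ f i < f j then 1 else 0 := by
        funext f; rw [cnt, Finset.card_filter]
      rw [heq]
      refine Finset.measurable_sum _ (fun i _ => ?_)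
      by_cases hij : i = j
      · simp only [hij, ne_eq, not_true_eq_false, false_and, if_false]
        exact measurable_const
      · have hset : MeasurableSet {f : Fin (n + 1) → ℝ | i ≠ j ∧ f i < f j} := by
          have : {f : Fin (n + 1) → ℝ | i ≠ j ∧ f i < f j} = {f | f i < f j} := by
            ext f; simp [hij]
          rw [this]
          exact measurableSet_lt (measurable_pi_apply i) (measurable_pi_apply j)
        exact Measurable.ite hset measurable_const measurable_const
    have hpre : S j = (fun f : Fin (n + 1) → ℝ => cnt f j) ⁻¹' {t | t ≤ K} := rfl
    rw [hpre]
    exact hmeas ((Set.to_countable _).measurableSet)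
  -- all the events have the same probability by exchangeability
  have hAeq : ∀ j, P (R ⁻¹' S j) = P (R ⁻¹' S (Fin.last n)) := by
    intro j
    have hπ := hexch (Equiv.swap (Fin.last n) j)
    have hRπ : Measurable (fun ω => R ω ∘ (Equiv.swap (Fin.last n) j)) :=
      measurable_pi_lambda _ (fun i => (measurable_pi_apply _).comp hR)
    have h1 : P (R ⁻¹' S (Fin.last n)) = Measure.map R P (S (Fin.last n)) :=
      (Measure.map_apply hR (hSm _)).symm
    rw [h1, ← hπ, Measure.map_apply hRπ (hSm _)]
    congr 1
    ext ω
    simp only [Set.mem_preimage, hSdef, Set.mem_setOf_eq]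
    rw [cnt_comp]
    simp [Equiv.swap_apply_left]
  have hKn : K < n + 1 := Nat.lt_succ_of_lt k.isLt
  -- the key counting inequality
  have hsum : ((K + 1 : ℕ) : ℝ≥0∞) ≤ ∑ j : Fin (n + 1), P (R ⁻¹' S j) := by
    have hpt : ∀ ω, ((K + 1 : ℕ) : ℝ≥0∞)
        ≤ ∑ j : Fin (n + 1), (R ⁻¹' S j).indicator (fun _ => (1 : ℝ≥0∞)) ω := by
      intro ω
      have h1 := count_ge (R ω) K hKn
      calc ((K + 1 : ℕ) : ℝ≥0∞)
          ≤ ((Finset.univ.filter (fun j => cnt (R ω) j ≤ K)).card : ℝ≥0∞) := by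
            exact_mod_cast h1
        _ = ∑ j : Fin (n + 1), (R ⁻¹' S j).indicator (fun _ => (1 : ℝ≥0∞)) ω := by
            rw [Finset.card_filter]
            push_cast
            refine Finset.sum_congr rfl (fun j _ => ?_)
            by_cases hj : cnt (R ω) j ≤ K
            · simp [Set.indicator_apply, hSdef, hj]
            · simp [Set.indicator_apply, hSdef, hj]
    calc ((K + 1 : ℕ) : ℝ≥0∞) = ∫⁻ _, ((K + 1 : ℕ) : ℝ≥0∞) ∂P := by simp
      _ ≤ ∫⁻ ω, ∑ j : Fin (n + 1), (R ⁻¹' S j).indicator (fun _ => (1 : ℝ≥0∞)) ω ∂P :=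
          lintegral_mono hpt
      _ = ∑ j : Fin (n + 1), ∫⁻ ω, (R ⁻¹' S j).indicator (fun _ => (1 : ℝ≥0∞)) ω ∂P :=
          lintegral_finset_sum _ (fun j _ => measurable_const.indicator (hR (hSm j)))
      _ = ∑ j : Fin (n + 1), P (R ⁻¹' S j) := by
          refine Finset.sum_congr rfl fun j _ => ?_
          exact lintegral_indicator_one (hR (hSm j))
  have hsum2 : ((K + 1 : ℕ) : ℝ≥0∞) ≤ ((n + 1 : ℕ) : ℝ≥0∞) * P (R ⁻¹' S (Fin.last n)) := by
    calc ((K + 1 : ℕ) : ℝ≥0∞) ≤ ∑ j : Fin (n + 1), P (R ⁻¹' S j) := hsum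
      _ = ∑ _j : Fin (n + 1), P (R ⁻¹' S (Fin.last n)) :=
          Finset.sum_congr rfl fun j _ => hAeq j
      _ = ((n + 1 : ℕ) : ℝ≥0∞) * P (R ⁻¹' S (Fin.last n)) := by
          simp [Finset.sum_const, Finset.card_univ, nsmul_eq_mul]
  -- from the counting inequality to the probability bound
  have hPA : ENNReal.ofReal (1 - α) ≤ P (R ⁻¹' S (Fin.last n)) := by
    have hceil := Int.le_ceil ((1 - α) * ((n : ℝ) + 1))
    rw [← hk] at hceil
    push_cast at hceil
    have hn1 : (0 : ℝ) < (n : ℝ) + 1 := by positivity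
    have hreal : 1 - α ≤ ((K : ℝ) + 1) / ((n : ℝ) + 1) := by
      rw [le_div_iff₀ hn1]; linarith
    have h2 : ENNReal.ofReal (1 - α) ≤ ENNReal.ofReal (((K : ℝ) + 1) / ((n : ℝ) + 1)) :=
      ENNReal.ofReal_le_ofReal hreal
    refine h2.trans ?_
    rw [ENNReal.ofReal_div_of_pos hn1]
    have hofK : ENNReal.ofReal ((K : ℝ) + 1) = ((K + 1 : ℕ) : ℝ≥0∞) := by
      rw [show (K : ℝ) + 1 = ((K + 1 : ℕ) : ℝ) by push_cast; ring, ENNReal.ofReal_natCast]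
    have hofn : ENNReal.ofReal ((n : ℝ) + 1) = ((n + 1 : ℕ) : ℝ≥0∞) := by
      rw [show (n : ℝ) + 1 = ((n + 1 : ℕ) : ℝ) by push_cast; ring, ENNReal.ofReal_natCast]
    rw [hofK, hofn, ENNReal.div_le_iff (by exact_mod_cast Nat.succ_ne_zero n)
      (ENNReal.natCast_ne_top _)]
    rw [mul_comm]
    exact hsum2
  -- the event ⊆ the target event
  refine hPA.trans (measure_mono ?_)
  intro ω hω
  simp only [Set.mem_preimage, hSdef, Set.mem_setOf_eq] at hω ⊢
  apply le_orderStat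
  have hle : (Finset.univ.filter
      (fun i : Fin n => R ω i.castSucc < R ω (Fin.last n))).card
      ≤ cnt (R ω) (Fin.last n) := by
    unfold cnt
    refine Finset.card_le_card_of_injOn (fun i => i.castSucc) ?_ ?_
    · intro i hi
      simp only [Finset.mem_coe, Finset.mem_filter, Finset.mem_univ, true_and] at hi ⊢
      exact ⟨(Fin.castSucc_lt_last i).ne, hi⟩
    · exact fun a _ b _ hab => Fin.castSucc_injective n hab
  exact hle.trans hω
end

section
/- Let (R_1, …, R_n, R_{n+1}) be an exchangeable random vector of real-valued random variables that are almost surely pairwise distinct. Let 0 < α < 1 be such that ⌈(1-α)(n+1)⌉ ≤ n, and let r̂ denote the ⌈(1-α)(n+1)⌉-th order statistic of R_1, …, R_n. Then P(R_{n+1} ≤ r̂) < 1 - α + 1/(n+1). -/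
open MeasureTheory Finset

noncomputable def rk {m : ℕ} (f : Fin m → ℝ) (j : Fin m) : ℕ :=
  (Finset.univ.filter fun i => f i < f j).card

lemma rk_comp {m : ℕ} (f : Fin m → ℝ) (π : Equiv.Perm (Fin m)) (j : Fin m) :
    rk (f ∘ π) j = rk f (π j) := by
  unfold rk
  apply Finset.card_bij' (fun i _ => π i) (fun i _ => π.symm i) <;> simp

lemma rk_lt {m : ℕ} (f : Fin m → ℝ) (j : Fin m) : rk f j < m := by
  have h : (Finset.univ.filter fun i => f i < f j) ⊆ Finset.univ.erase j := by
    intro i hi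
    simp only [mem_filter, mem_univ, true_and] at hi
    exact Finset.mem_erase.2 ⟨fun h => by simp [h] at hi, mem_univ i⟩
  calc rk f j ≤ (Finset.univ.erase j).card := Finset.card_le_card h
    _ < Finset.univ.card := Finset.card_erase_lt_of_mem (mem_univ j)
    _ = m := by simp

lemma rk_strictMono {m : ℕ} (f : Fin m → ℝ) {a b : Fin m} (h : f a < f b) :
    rk f a < rk f b := by
  apply Finset.card_lt_card
  constructor
  · intro i hi
    simp only [mem_filter, mem_univ, true_and] at hi ⊢
    exact hi.trans h
  · intro hsub
    have : a ∈ Finset.univ.filter fun i => f i < f b := by simp [h]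
    have := hsub this
    simp at this

lemma rk_injective {m : ℕ} {f : Fin m → ℝ} (hf : Function.Injective f) :
    Function.Injective (rk f) := by
  intro a b hab
  by_contra hne
  rcases lt_or_gt_of_ne (fun h : f a = f b => hne (hf h)) with h | h
  · exact absurd hab (Nat.ne_of_lt (rk_strictMono f h))
  · exact absurd hab.symm (Nat.ne_of_lt (rk_strictMono f h))

lemma rk_surj {m : ℕ} {f : Fin m → ℝ} (hf : Function.Injective f) (i : Fin m) :
    ∃ j, rk f j = (i : ℕ) := by
  have hinj : Function.Injective (fun j => (⟨rk f j, rk_lt f j⟩ : Fin m)) := by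
    intro a b hab
    exact rk_injective hf (congrArg Fin.val hab)
  have hsurj := Finite.surjective_of_injective hinj
  obtain ⟨j, hj⟩ := hsurj i
  exact ⟨j, congrArg Fin.val hj⟩

lemma card_lt_orderStat {n : ℕ} (g : Fin n → ℝ) (hg : Function.Injective g) (k : Fin n) :
    (Finset.univ.filter fun i => g i < orderStat g k).card = (k : ℕ) := by
  have hmono : StrictMono (g ∘ Tuple.sort g) :=
    (Tuple.monotone_sort g).strictMono_of_injective (hg.comp (Tuple.sort g).injective)
  have hset : (Finset.univ.filter fun i => g i < orderStat g k) =
      (Finset.univ.filter fun i => i < k).map ⟨Tuple.sort g, (Tuple.sort g).injective⟩ := by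
    ext i
    simp only [mem_filter, mem_univ, true_and, mem_map, Function.Embedding.coeFn_mk]
    constructor
    · intro hi
      refine ⟨(Tuple.sort g).symm i, ?_, by simp⟩
      have : g (Tuple.sort g ((Tuple.sort g).symm i)) < g (Tuple.sort g k) := by
        simpa [orderStat] using hi
      exact hmono.lt_iff_lt.1 this
    · rintro ⟨j, hj, rfl⟩
      exact hmono hj
  rw [hset, Finset.card_map]
  have : (Finset.univ.filter fun i => i < k) = Finset.Iio k := by ext i; simp
  rw [this, Fin.card_Iio]

lemma le_orderStat_iff {n : ℕ} (g : Fin n → ℝ) (hg : Function.Injective g)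
    (x : ℝ) (hx : ∀ i, g i ≠ x) (k : Fin n) :
    x ≤ orderStat g k ↔ (Finset.univ.filter fun i => g i < x).card ≤ (k : ℕ) := by
  constructor
  · intro h
    have hlt : x < orderStat g k := lt_of_le_of_ne h (fun he => hx _ he.symm)
    calc (Finset.univ.filter fun i => g i < x).card
        ≤ (Finset.univ.filter fun i => g i < orderStat g k).card := by
          apply Finset.card_le_card
          intro i hi
          simp only [mem_filter, mem_univ, true_and] at hi ⊢
          exact hi.trans hlt
      _ = (k : ℕ) := card_lt_orderStat g hg k
  · intro h
    by_contra hlt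
    push_neg at hlt
    have hsub : insert (Tuple.sort g k) (Finset.univ.filter fun i => g i < orderStat g k)
        ⊆ Finset.univ.filter fun i => g i < x := by
      intro i hi
      rcases Finset.mem_insert.1 hi with rfl | hi
      · simp only [mem_filter, mem_univ, true_and]
        exact hlt
      · simp only [mem_filter, mem_univ, true_and] at hi ⊢
        exact hi.trans hlt
    have hnotmem : Tuple.sort g k ∉ (Finset.univ.filter fun i => g i < orderStat g k) := by
      rw [mem_filter]; exact fun h => lt_irrefl _ h.2
    have := Finset.card_le_card hsub
    rw [Finset.card_insert_of_notMem hnotmem, card_lt_orderStat g hg k] at this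
    omega

lemma rk_last_eq {n : ℕ} (f : Fin (n + 1) → ℝ) :
    (Finset.univ.filter fun i : Fin (n+1) => f i < f (Fin.last n)).card =
    (Finset.univ.filter fun i : Fin n => f i.castSucc < f (Fin.last n)).card := by
  have key : (Finset.univ.filter fun i : Fin n => f i.castSucc < f (Fin.last n)).map
      Fin.castSuccEmb = Finset.univ.filter fun i : Fin (n+1) => f i < f (Fin.last n) := by
    ext a
    simp only [mem_map, mem_filter, mem_univ, true_and, Fin.castSuccEmb,
      Function.Embedding.coeFn_mk]
    constructor
    · rintro ⟨i, hi, rfl⟩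
      exact hi
    · intro ha
      have hne : a ≠ Fin.last n := by
        rintro rfl
        exact lt_irrefl _ ha
      obtain ⟨i, rfl⟩ := Fin.exists_castSucc_eq.2 hne
      exact ⟨i, ha, rfl⟩
  rw [← key, Finset.card_map]

lemma measurable_rk {m : ℕ} (j : Fin m) : Measurable (fun f : Fin m → ℝ => rk f j) := by
  have h : (fun f : Fin m → ℝ => rk f j) =
      fun f => ∑ i : Fin m, if f i < f j then 1 else 0 := by
    ext f
    rw [rk, Finset.card_filter]
  rw [h]
  exact Finset.measurable_sum _ fun i _ =>
    Measurable.ite (measurableSet_lt (measurable_pi_apply i) (measurable_pi_apply j))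
      measurable_const measurable_const

/-- Split conformal upper bound: for an exchangeable random vector
`(R 0, …, R (n-1), R n)` whose components are almost surely pairwise distinct,
a miscoverage level `0 < α < 1` with `⌈(1 - α)(n + 1)⌉ ≤ n` (witnessed by the
index `k : Fin n` with `k + 1 = ⌈(1 - α)(n + 1)⌉`, 0-indexed), and `r̂` the
`⌈(1 - α)(n + 1)⌉`-th order statistic of the first `n` components, we have
`P(R n ≤ r̂) < 1 - α + 1/(n + 1)`. -/
theorem split_conformal_upper_bound {Ω : Type*} [MeasurableSpace Ω]
    (P : Measure Ω) [IsProbabilityMeasure P] (n : ℕ) (R : Ω → Fin (n + 1) → ℝ)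
    (hR : Measurable R) (hexch : Exchangeable P R)
    (hdist : ∀ᵐ ω ∂P, Function.Injective (R ω))
    (α : ℝ) (hα0 : 0 < α) (hα1 : α < 1)
    (k : Fin n) (hk : ((k : ℕ) : ℤ) + 1 = ⌈(1 - α) * ((n : ℝ) + 1)⌉) :
    P {ω | R ω (Fin.last n) ≤ orderStat (fun i : Fin n => R ω i.castSucc) k} <
      ENNReal.ofReal (1 - α + 1 / ((n : ℝ) + 1)) := by
  classical
  set μ := Measure.map R P with hμ
  haveI : IsProbabilityMeasure μ := Measure.isProbabilityMeasure_map hR.aemeasurable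
  have hcompMeas : ∀ π : Equiv.Perm (Fin (n+1)),
      Measurable (fun f : Fin (n+1) → ℝ => f ∘ π) :=
    fun π => measurable_pi_lambda _ fun i => measurable_pi_apply (π i)
  have hinv : ∀ π : Equiv.Perm (Fin (n+1)),
      Measure.map (fun f : Fin (n+1) → ℝ => f ∘ π) μ = μ := by
    intro π
    rw [hμ, Measure.map_map (hcompMeas π) hR]
    exact hexch π
  set I : Set (Fin (n+1) → ℝ) := {f | Function.Injective f} with hIdef
  have hI : MeasurableSet I := by
    have h : I = ⋂ (i) (j) (_ : i ≠ j), {f : Fin (n+1) → ℝ | f i ≠ f j} := by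
      ext f
      simp only [Set.mem_iInter, Set.mem_setOf_eq, hIdef]
      constructor
      · intro hf i j hij he
        exact hij (hf he)
      · intro h a b hab
        by_contra hne
        exact h a b hne hab
    rw [h]
    exact MeasurableSet.iInter fun i => MeasurableSet.iInter fun j => MeasurableSet.iInter
      fun _ => (measurableSet_eq_fun (measurable_pi_apply i) (measurable_pi_apply j)).compl
  have hIμ : μ I = 1 := by
    rw [← prob_compl_eq_zero_iff hI, hμ, Measure.map_apply hR hI.compl]
    have : R ⁻¹' Iᶜ = {ω | ¬ Function.Injective (R ω)} := rfl
    rw [this]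
    exact ae_iff.1 hdist
  set A : ℕ → Fin (n+1) → Set (Fin (n+1) → ℝ) := fun i j => {f | rk f j = i} with hAdef
  have hA : ∀ i j, MeasurableSet (A i j) :=
    fun i j => measurable_rk j (measurableSet_singleton i)
  have hAinv : ∀ (i : ℕ) (j : Fin (n+1)), μ (A i j) = μ (A i (Fin.last n)) := by
    intro i j
    have hpre : (fun f : Fin (n+1) → ℝ => f ∘ (Equiv.swap (Fin.last n) j)) ⁻¹'
        (A i (Fin.last n)) = A i j := by
      ext f
      simp only [Set.mem_preimage, hAdef, Set.mem_setOf_eq]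
      rw [rk_comp, Equiv.swap_apply_left]
    calc μ (A i j)
        = μ ((fun f : Fin (n+1) → ℝ => f ∘ (Equiv.swap (Fin.last n) j)) ⁻¹'
            (A i (Fin.last n))) := by rw [hpre]
      _ = (Measure.map (fun f : Fin (n+1) → ℝ => f ∘ (Equiv.swap (Fin.last n) j)) μ)
            (A i (Fin.last n)) := (Measure.map_apply (hcompMeas _) (hA i _)).symm
      _ = μ (A i (Fin.last n)) := by rw [hinv]
  have huniform : ∀ i : ℕ, i < n + 1 → μ (A i (Fin.last n)) = (↑(n+1) : ENNReal)⁻¹ := by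
    intro i hi
    have hcover : (⋃ j : Fin (n+1), A i j ∩ I) = I := by
      apply Set.Subset.antisymm
      · exact Set.iUnion_subset fun j => Set.inter_subset_right
      · intro f hf
        obtain ⟨j, hj⟩ := rk_surj hf ⟨i, hi⟩
        exact Set.mem_iUnion.2 ⟨j, hj, hf⟩
    have hdisj : Pairwise (Function.onFun Disjoint fun j => A i j ∩ I) := by
      intro j1 j2 hne
      rw [Function.onFun, Set.disjoint_left]
      rintro f ⟨hf1, hfI⟩ ⟨hf2, _⟩
      exact hne (rk_injective hfI (hf1.trans hf2.symm))
    have hsum : ∑ j : Fin (n+1), μ (A i j ∩ I) = 1 := by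
      rw [← tsum_fintype (L := SummationFilter.unconditional _), ← measure_iUnion hdisj (fun j => (hA i j).inter hI), hcover, hIμ]
    have hinterI : ∀ j, μ (A i j ∩ I) = μ (A i j) := by
      intro j
      apply measure_inter_conull
      rwa [← prob_compl_eq_zero_iff hI] at hIμ
    have hsum2 : (↑(n+1) : ENNReal) * μ (A i (Fin.last n)) = 1 := by
      have := hsum
      rw [Finset.sum_congr rfl (fun j _ => by rw [hinterI j, hAinv i j])] at this
      rwa [Finset.sum_const, Finset.card_univ, Fintype.card_fin, nsmul_eq_mul] at this
    have hne0 : (↑(n+1) : ENNReal) ≠ 0 := by simp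
    have hnetop : (↑(n+1) : ENNReal) ≠ ⊤ := by simp
    calc μ (A i (Fin.last n))
        = (↑(n+1) : ENNReal)⁻¹ * ((↑(n+1) : ENNReal) * μ (A i (Fin.last n))) := by
          rw [← mul_assoc, ENNReal.inv_mul_cancel hne0 hnetop, one_mul]
      _ = (↑(n+1) : ENNReal)⁻¹ := by rw [hsum2, mul_one]
  -- event rewriting
  set S' : Set Ω := {ω | rk (R ω) (Fin.last n) ≤ (k : ℕ)} with hS'def
  have hae : {ω | R ω (Fin.last n) ≤ orderStat (fun i : Fin n => R ω i.castSucc) k}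
      =ᵐ[P] S' := by
    filter_upwards [hdist] with ω hω
    have hg : Function.Injective (fun i : Fin n => R ω i.castSucc) :=
      hω.comp (Fin.castSucc_injective n)
    have hx : ∀ i : Fin n, R ω i.castSucc ≠ R ω (Fin.last n) := by
      intro i he
      exact absurd (hω he) (Fin.castSucc_lt_last i).ne
    have hiff := le_orderStat_iff (fun i : Fin n => R ω i.castSucc) hg
      (R ω (Fin.last n)) hx k
    rw [eq_iff_iff]
    show (R ω (Fin.last n) ≤ orderStat (fun i : Fin n => R ω i.castSucc) k) ↔
      (rk (R ω) (Fin.last n) ≤ (k : ℕ))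
    rw [hiff]
    unfold rk
    rw [rk_last_eq (R ω)]
  have hPS' : P S' = ((k : ℕ) + 1 : ℕ) * (↑(n+1) : ENNReal)⁻¹ := by
    have hTpre : S' = R ⁻¹' (⋃ i ∈ Finset.range ((k : ℕ) + 1), A i (Fin.last n)) := by
      ext ω
      simp only [hS'def, Set.mem_setOf_eq, Set.mem_preimage, Set.mem_iUnion, hAdef,
        Finset.mem_range, Nat.lt_succ_iff]
      constructor
      · intro h
        exact ⟨rk (R ω) (Fin.last n), h, rfl⟩
      · rintro ⟨i, hi, rfl⟩
        exact hi
    have hTmeas : MeasurableSet (⋃ i ∈ Finset.range ((k : ℕ) + 1), A i (Fin.last n)) :=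
      MeasurableSet.biUnion (Finset.range _).countable_toSet (fun i _ => hA i _)
    have hdisj2 : (↑(Finset.range ((k : ℕ) + 1)) : Set ℕ).PairwiseDisjoint
        (fun i => A i (Fin.last n)) := by
      intro i1 _ i2 _ hne
      rw [Function.onFun, Set.disjoint_left]
      rintro f hf1 hf2
      exact hne (hf1.symm.trans hf2)
    rw [hTpre, ← Measure.map_apply hR hTmeas, ← hμ,
      measure_biUnion_finset hdisj2 (fun i _ => hA i _)]
    rw [Finset.sum_congr rfl (fun i hi => huniform i (by
      have := Finset.mem_range.1 hi
      omega))]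
    rw [Finset.sum_const, Finset.card_range, nsmul_eq_mul]
  rw [measure_congr hae, hPS']
  -- final arithmetic
  have hpos : (0 : ℝ) < (n : ℝ) + 1 := by positivity
  have hceil : ((k : ℝ) + 1) < (1 - α) * ((n : ℝ) + 1) + 1 := by
    have h1 : ((⌈(1 - α) * ((n : ℝ) + 1)⌉ : ℤ) : ℝ) < (1 - α) * ((n : ℝ) + 1) + 1 :=
      Int.ceil_lt_add_one _
    have h2 : ((k : ℝ) + 1) = ((⌈(1 - α) * ((n : ℝ) + 1)⌉ : ℤ) : ℝ) := by
      rw [← hk]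
      push_cast
      ring
    linarith
  have hlhs : (((k : ℕ) + 1 : ℕ) : ENNReal) * (↑(n+1) : ENNReal)⁻¹ =
      ENNReal.ofReal (((k : ℝ) + 1) / ((n : ℝ) + 1)) := by
    rw [ENNReal.ofReal_div_of_pos hpos]
    congr 1
    · rw [show ((k : ℝ) + 1) = (((k : ℕ) + 1 : ℕ) : ℝ) by push_cast; ring,
        ENNReal.ofReal_natCast]
    · rw [show ((n : ℝ) + 1) = (((n + 1 : ℕ)) : ℝ) by push_cast; ring,
        ENNReal.ofReal_natCast]
  rw [hlhs]
  have hrpos : (0 : ℝ) < 1 - α + 1 / ((n : ℝ) + 1) := by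
    have : (0 : ℝ) < 1 / ((n : ℝ) + 1) := by positivity
    linarith
  rw [ENNReal.ofReal_lt_ofReal_iff hrpos, div_lt_iff₀ hpos]
  have hexp : (1 - α + 1 / ((n : ℝ) + 1)) * ((n : ℝ) + 1) = (1 - α) * ((n : ℝ) + 1) + 1 := by
    field_simp
  linarith
end

section
/- Let (R_1, …, R_{n+1}) be an exchangeable random vector of real-valued random variables that are almost surely pairwise distinct. Then the rank of R_{n+1} among R_1, …, R_{n+1}, i.e., the random variable #{i ∈ {1, …, n+1} : R_i ≤ R_{n+1}}, is uniformly distributed on {1, …, n+1}. -/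
open MeasureTheory

private lemma rank_measurable {n : ℕ} (i : Fin (n + 1)) :
    Measurable fun x : Fin (n + 1) → ℝ =>
      (Finset.univ.filter fun k => x k ≤ x i).card := by
  simp only [Finset.card_filter]
  exact Finset.measurable_sum _ fun k _ =>
    Measurable.ite (measurableSet_le (measurable_pi_apply k) (measurable_pi_apply i))
      measurable_const measurable_const

private lemma rank_existsUnique {n : ℕ} {x : Fin (n + 1) → ℝ}
    (hx : Function.Injective x) (j : Fin (n + 1)) :
    ∃! i, (Finset.univ.filter fun k => x k ≤ x i).card = (j : ℕ) + 1 := by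
  set r : Fin (n + 1) → ℕ := fun i => (Finset.univ.filter fun k => x k ≤ x i).card with hr
  have h1 : ∀ i, 1 ≤ r i := fun i => Finset.card_pos.2 ⟨i, by simp⟩
  have h2 : ∀ i, r i ≤ n + 1 := fun i =>
    le_trans (Finset.card_filter_le _ _) (by simp)
  have hinj : Function.Injective r := by
    intro a b hab
    have key : ∀ a b : Fin (n + 1), x a ≤ x b → r a = r b → a = b := by
      intro a b hle heq
      have hsub : (Finset.univ.filter fun k => x k ≤ x a)
          ⊆ (Finset.univ.filter fun k => x k ≤ x b) := by
        intro k hk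
        simp only [Finset.mem_filter] at *
        exact ⟨hk.1, hk.2.trans hle⟩
      have heqs := Finset.eq_of_subset_of_card_le hsub (le_of_eq heq.symm)
      have hb : b ∈ (Finset.univ.filter fun k => x k ≤ x a) := by
        rw [heqs]; simp
      simp only [Finset.mem_filter] at hb
      exact hx (le_antisymm hle hb.2)
    rcases le_total (x a) (x b) with h | h
    · exact key a b h hab
    · exact (key b a h hab.symm).symm
  have hinj' : Function.Injective (fun i => (⟨r i - 1, by
      have := h1 i; have := h2 i; omega⟩ : Fin (n + 1))) := by
    intro a b hab
    apply hinj
    have := h1 a; have := h1 b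
    have : r a - 1 = r b - 1 := congrArg Fin.val hab
    omega
  have hbij := (Finite.injective_iff_bijective).1 hinj'
  obtain ⟨i, hi⟩ := hbij.2 j
  refine ⟨i, ?_, ?_⟩
  · show r i = (j : ℕ) + 1
    have : r i - 1 = (j : ℕ) := congrArg Fin.val hi
    have := h1 i; omega
  · intro y hy
    apply hinj
    have hy' : r y = (j : ℕ) + 1 := hy
    have : r i - 1 = (j : ℕ) := congrArg Fin.val hi
    have := h1 i
    show r y = r i
    omega

/-- For an exchangeable random vector `(R 0, …, R n)` with almost surely pairwise
distinct components, the rank of the last component `R n` among all the `n + 1`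
components, i.e. `#{i : R i ≤ R n}`, is uniformly distributed on `{1, …, n + 1}`:
each value `j + 1` (for `j : Fin (n + 1)`) has probability `1/(n + 1)`. -/
theorem rank_uniform_of_exchangeable {Ω : Type*} [MeasurableSpace Ω]
    (P : Measure Ω) [IsProbabilityMeasure P] (n : ℕ) (R : Ω → Fin (n + 1) → ℝ)
    (hR : Measurable R) (hexch : Exchangeable P R)
    (hdist : ∀ᵐ ω ∂P, Function.Injective (R ω)) (j : Fin (n + 1)) :
    P {ω | (Finset.univ.filter fun i => R ω i ≤ R ω (Fin.last n)).card = (j : ℕ) + 1} =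
      1 / ((n + 1 : ℕ) : ENNReal) := by
  classical
  set B : Fin (n + 1) → Set Ω := fun i =>
    {ω | (Finset.univ.filter fun k => R ω k ≤ R ω i).card = (j : ℕ) + 1} with hB
  have hBmeas : ∀ i, MeasurableSet (B i) := by
    intro i
    have : B i = (fun ω => (Finset.univ.filter fun k => R ω k ≤ R ω i).card) ⁻¹'
        {(j : ℕ) + 1} := rfl
    rw [this]
    exact ((rank_measurable i).comp hR) (measurableSet_singleton _)
  -- the "bad" set of non-injective outcomes is null
  have hbad : P {ω | ¬ Function.Injective (R ω)} = 0 := ae_iff.1 hdist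
  -- all B i have equal measure via exchangeability
  have hSmeas : ∀ i : Fin (n + 1), MeasurableSet
      {x : Fin (n + 1) → ℝ | (Finset.univ.filter fun k => x k ≤ x i).card = (j : ℕ) + 1} := by
    intro i
    exact (rank_measurable i) (measurableSet_singleton _)
  have key : ∀ i : Fin (n + 1), P (B (Fin.last n)) = P (B i) := by
    intro i
    set π : Equiv.Perm (Fin (n + 1)) := Equiv.swap (Fin.last n) i with hπ
    have hπlast : π (Fin.last n) = i := Equiv.swap_apply_left _ _
    set S : Set (Fin (n + 1) → ℝ) :=
      {x | (Finset.univ.filter fun k => x k ≤ x (Fin.last n)).card = (j : ℕ) + 1} with hS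
    have hRπ : Measurable fun ω => R ω ∘ π := by
      apply measurable_pi_iff.2
      intro k
      exact (measurable_pi_apply (π k)).comp hR
    have h1 : P (B (Fin.last n)) = Measure.map R P S :=
      (Measure.map_apply hR (hSmeas (Fin.last n))).symm
    have h2 : Measure.map R P S = Measure.map (fun ω => R ω ∘ π) P S := by
      rw [hexch π]
    have h3 : Measure.map (fun ω => R ω ∘ π) P S = P ((fun ω => R ω ∘ π) ⁻¹' S) :=
      Measure.map_apply hRπ (hSmeas (Fin.last n))
    have h4 : (fun ω => R ω ∘ π) ⁻¹' S = B i := by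
      ext ω
      simp only [Set.mem_preimage, hS, Set.mem_setOf_eq, hB, Function.comp]
      have hcard : (Finset.univ.filter fun k => R ω (π k) ≤ R ω (π (Fin.last n))).card
          = (Finset.univ.filter fun k => R ω k ≤ R ω (π (Fin.last n))).card := by
        apply Finset.card_equiv π
        intro k
        simp
      rw [hcard, hπlast]
    rw [h1, h2, h3, h4]
  -- a.e. pairwise disjointness
  have hdisj : Pairwise (Function.onFun (AEDisjoint P) B) := by
    intro a b hab
    refine measure_mono_null ?_ hbad
    rintro ω ⟨ha, hb⟩
    intro hinj
    obtain ⟨i, -, huniq⟩ := rank_existsUnique hinj j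
    exact hab ((huniq a ha).trans (huniq b hb).symm)
  -- the union has full measure
  have hcover : {ω | Function.Injective (R ω)} ⊆ ⋃ i, B i := by
    intro ω hω
    obtain ⟨i, hi, -⟩ := rank_existsUnique hω j
    exact Set.mem_iUnion.2 ⟨i, hi⟩
  have hunion : P (⋃ i, B i) = 1 := by
    apply le_antisymm prob_le_one
    have : (1 : ENNReal) = P Set.univ := (measure_univ).symm
    rw [this]
    calc P Set.univ ≤ P ((⋃ i, B i) ∪ {ω | ¬ Function.Injective (R ω)}) := by
          apply measure_mono
          intro ω _
          by_cases h : Function.Injective (R ω)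
          · exact Or.inl (hcover h)
          · exact Or.inr h
      _ ≤ P (⋃ i, B i) + P {ω | ¬ Function.Injective (R ω)} := measure_union_le _ _
      _ = P (⋃ i, B i) := by rw [hbad, add_zero]
  have hsum : ∑' i, P (B i) = 1 := by
    rw [← measure_iUnion₀ hdisj (fun i => (hBmeas i).nullMeasurableSet), hunion]
  have hsum' : (↑(n + 1) : ENNReal) * P (B (Fin.last n)) = 1 := by
    rw [← hsum]
    rw [tsum_fintype]
    have : ∀ i : Fin (n + 1), P (B i) = P (B (Fin.last n)) := fun i => (key i).symm
    rw [Finset.sum_congr rfl (fun i _ => this i), Finset.sum_const, Finset.card_univ,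
      Fintype.card_fin, nsmul_eq_mul]
  have hgoal : P (B (Fin.last n)) = 1 / ((n + 1 : ℕ) : ENNReal) := by
    rw [ENNReal.eq_div_iff (by exact_mod_cast Nat.succ_ne_zero n) (ENNReal.natCast_ne_top _)]
    exact hsum'
  exact hgoal
end

section
/- Let Z_1, …, Z_{n+1} be an exchangeable sequence of random variables taking values in a measurable space E, and let g : E → ℝ be a measurable function. Then the random vector (g(Z_1), …, g(Z_{n+1})) is exchangeable; consequently, for 0 < α < 1 with ⌈(1-α)(n+1)⌉ ≤ n and r̂ denoting the ⌈(1-α)(n+1)⌉-th order statistic of g(Z_1), …, g(Z_n), one has P(g(Z_{n+1}) ≤ r̂) ≥ 1 - α. -/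
open MeasureTheory Finset
open scoped ENNReal

/-- number of strictly smaller entries than `c`. -/
noncomputable def cntLt {m : ℕ} (x : Fin m → ℝ) (c : ℝ) : ℕ :=
  #{i | x i < c}

lemma measurable_cntLt {m : ℕ} (j : Fin m) :
    Measurable (fun x : Fin m → ℝ => cntLt x (x j)) := by
  have : (fun x : Fin m → ℝ => cntLt x (x j)) =
      fun x => ∑ i : Fin m, if x i < x j then 1 else 0 := by
    funext x
    unfold cntLt
    rw [← Nat.cast_id (#{i | x i < x j}), Finset.natCast_card_filter]
  rw [this]
  exact Finset.measurable_sum _ fun i _ =>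
    Measurable.ite (measurableSet_lt (measurable_pi_apply i) (measurable_pi_apply j))
      measurable_const measurable_const

lemma cntLt_comp_perm {m : ℕ} (x : Fin m → ℝ) (τ : Equiv.Perm (Fin m)) (c : ℝ) :
    cntLt (x ∘ τ) c = cntLt x c := by
  unfold cntLt
  apply Finset.card_bij' (fun i _ => τ i) (fun i _ => τ.symm i) <;>
    simp [Function.comp]

/-- order statistic characterization -/
lemma le_orderStat_iff_s17 {m : ℕ} (f : Fin m → ℝ) (k : Fin m) (c : ℝ) :
    c ≤ orderStat f k ↔ cntLt f c ≤ (k : ℕ) := by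
  set σ := Tuple.sort f with hσ
  have hmono : Monotone (f ∘ σ) := Tuple.monotone_sort f
  constructor
  · intro h
    have hinj : Set.InjOn (fun i => σ.symm i) ↑({i | f i < c} : Finset (Fin m)) :=
      fun a _ b _ hab => σ.symm.injective hab
    have hsub : ∀ i ∈ ({i | f i < c} : Finset (Fin m)), σ.symm i ∈ Finset.Iio k := by
      intro i hi
      simp only [Finset.mem_filter] at hi
      simp only [Finset.mem_Iio]
      by_contra hle
      push_neg at hle
      have := hmono hle
      simp only [Function.comp_apply, Equiv.apply_symm_apply] at this
      exact absurd (lt_of_lt_of_le hi.2 (le_trans h this)) (lt_irrefl _)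
    calc cntLt f c ≤ (Finset.Iio k).card :=
          Finset.card_le_card_of_injOn _ hsub hinj
      _ = (k : ℕ) := Fin.card_Iio k
  · intro h
    by_contra hlt
    push_neg at hlt
    have hsub : ∀ p ∈ Finset.Iic k, σ p ∈ ({i | f i < c} : Finset (Fin m)) := by
      intro p hp
      simp only [Finset.mem_Iic] at hp
      simp only [Finset.mem_filter, Finset.mem_univ, true_and]
      exact lt_of_le_of_lt (hmono hp) hlt
    have hinj : Set.InjOn (fun p => σ p) ↑(Finset.Iic k) :=
      fun a _ b _ hab => σ.injective hab
    have : (Finset.Iic k).card ≤ cntLt f c :=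
      Finset.card_le_card_of_injOn _ hsub hinj
    rw [Fin.card_Iic] at this
    omega

/-- key combinatorial lemma: at least `k+1` indices have strict-rank `≤ k`. -/
lemma card_rank_le {M : ℕ} (x : Fin M → ℝ) (k : ℕ) (hk : k < M) :
    k + 1 ≤ #{j | cntLt x (x j) ≤ k} := by
  set σ := Tuple.sort x with hσ
  have hmono : Monotone (x ∘ σ) := Tuple.monotone_sort x
  have hrank : ∀ p : Fin M, cntLt x (x (σ p)) ≤ (p : ℕ) := by
    intro p
    have hsub : ∀ i ∈ ({i | x i < x (σ p)} : Finset (Fin M)), σ.symm i ∈ Finset.Iio p := by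
      intro i hi
      simp only [Finset.mem_filter] at hi
      simp only [Finset.mem_Iio]
      by_contra hle
      push_neg at hle
      have := hmono hle
      simp only [Function.comp_apply, Equiv.apply_symm_apply] at this
      exact absurd (lt_of_lt_of_le hi.2 this) (lt_irrefl _)
    have hinj : Set.InjOn (fun i => σ.symm i) ↑({i | x i < x (σ p)} : Finset (Fin M)) :=
      fun a _ b _ hab => σ.symm.injective hab
    calc cntLt x (x (σ p)) ≤ (Finset.Iio p).card :=
          Finset.card_le_card_of_injOn _ hsub hinj
      _ = (p : ℕ) := Fin.card_Iio p
  have hsub : ∀ p ∈ Finset.Iic (⟨k, hk⟩ : Fin M),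
      σ p ∈ ({j | cntLt x (x j) ≤ k} : Finset (Fin M)) := by
    intro p hp
    simp only [Finset.mem_Iic, Fin.le_def] at hp
    simp only [Finset.mem_filter, Finset.mem_univ, true_and]
    exact le_trans (hrank p) hp
  have hinj : Set.InjOn (fun p => σ p) ↑(Finset.Iic (⟨k, hk⟩ : Fin M)) :=
    fun a _ b _ hab => σ.injective hab
  have := Finset.card_le_card_of_injOn _ hsub hinj
  rwa [Fin.card_Iic] at this

/-- Split conformal prediction with a fixed score function: if `Z 0, …, Z n` is an
exchangeable sequence in `E` and `g : E → ℝ` is measurable, then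
`(g (Z 0), …, g (Z n))` is exchangeable and, for `0 < α < 1` with
`⌈(1 - α)(n + 1)⌉ ≤ n` (witnessed by `k : Fin n` with `k + 1 = ⌈(1 - α)(n + 1)⌉`,
0-indexed) and `r̂` the corresponding order statistic of `g (Z 0), …, g (Z (n-1))`,
we have `P(g (Z n) ≤ r̂) ≥ 1 - α`. -/
theorem split_conformal_score_exchangeable_and_coverage
    {Ω E : Type*} [MeasurableSpace Ω] [MeasurableSpace E]
    (P : Measure Ω) [IsProbabilityMeasure P] (n : ℕ)
    (Z : Ω → Fin (n + 1) → E) (hZ : Measurable Z)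
    (hexch : ∀ π : Equiv.Perm (Fin (n + 1)),
      Measure.map (fun ω => Z ω ∘ π) P = Measure.map Z P)
    (g : E → ℝ) (hg : Measurable g)
    (α : ℝ) (hα0 : 0 < α) (hα1 : α < 1)
    (k : Fin n) (hk : ((k : ℕ) : ℤ) + 1 = ⌈(1 - α) * ((n : ℝ) + 1)⌉) :
    Exchangeable P (fun ω i => g (Z ω i)) ∧
      ENNReal.ofReal (1 - α) ≤
        P {ω | g (Z ω (Fin.last n)) ≤
          orderStat (fun i : Fin n => g (Z ω i.castSucc)) k} := by
  set R : Ω → Fin (n + 1) → ℝ := fun ω i => g (Z ω i) with hRdef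
  have hR : Measurable R :=
    measurable_pi_iff.2 fun i => hg.comp ((measurable_pi_apply i).comp hZ)
  have hΦ : Measurable (fun y : Fin (n + 1) → E => fun i => g (y i)) :=
    measurable_pi_iff.2 fun i => hg.comp (measurable_pi_apply i)
  have hcompπ : ∀ π : Equiv.Perm (Fin (n + 1)),
      Measurable (fun x : Fin (n + 1) → ℝ => x ∘ π) :=
    fun π => measurable_pi_iff.2 fun i => measurable_pi_apply (π i)
  have hZπ : ∀ π : Equiv.Perm (Fin (n + 1)), Measurable (fun ω => Z ω ∘ π) :=
    fun π => measurable_pi_iff.2 fun i => (measurable_pi_apply (π i)).comp hZ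
  have hexchR : Exchangeable P R := by
    intro π
    have h1 : (fun ω => R ω ∘ π) = (fun y : Fin (n + 1) → E => fun i => g (y i)) ∘
        (fun ω => Z ω ∘ π) := rfl
    have h2 : R = (fun y : Fin (n + 1) → E => fun i => g (y i)) ∘ Z := rfl
    rw [h1, h2, ← Measure.map_map hΦ (hZπ π), ← Measure.map_map hΦ hZ, hexch π]
  refine ⟨hexchR, ?_⟩
  -- pushforward measure
  set μ : Measure (Fin (n + 1) → ℝ) := Measure.map R P with hμdef
  have hμprob : IsProbabilityMeasure μ := Measure.isProbabilityMeasure_map hR.aemeasurable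
  have hμinv : ∀ π : Equiv.Perm (Fin (n + 1)),
      Measure.map (fun x => x ∘ π) μ = μ := by
    intro π
    rw [hμdef, Measure.map_map (hcompπ π) hR]
    exact hexchR π
  -- the sets S j
  set S : Fin (n + 1) → Set (Fin (n + 1) → ℝ) :=
    fun j => {x | cntLt x (x j) ≤ (k : ℕ)} with hSdef
  have hS : ∀ j, MeasurableSet (S j) := fun j =>
    (measurable_cntLt j) measurableSet_Iic
  have hμS : ∀ j, μ (S j) = μ (S (Fin.last n)) := by
    intro j
    set τ : Equiv.Perm (Fin (n + 1)) := Equiv.swap j (Fin.last n) with hτ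
    have hpre : (fun x : Fin (n + 1) → ℝ => x ∘ τ) ⁻¹' S (Fin.last n) = S j := by
      ext x
      simp only [hSdef, Set.mem_preimage, Set.mem_setOf_eq, Function.comp_apply]
      rw [show τ (Fin.last n) = j from Equiv.swap_apply_right _ _,
        cntLt_comp_perm x τ (x j)]
    calc μ (S j) = μ ((fun x : Fin (n + 1) → ℝ => x ∘ τ) ⁻¹' S (Fin.last n)) := by
          rw [hpre]
      _ = Measure.map (fun x => x ∘ τ) μ (S (Fin.last n)) :=
          (Measure.map_apply (hcompπ τ) (hS (Fin.last n))).symm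
      _ = μ (S (Fin.last n)) := by rw [hμinv τ]
  -- integral lower bound
  have hsum : ((k : ℕ) + 1 : ℝ≥0∞) ≤ (n + 1 : ℝ≥0∞) * μ (S (Fin.last n)) := by
    have hpt : ∀ x : Fin (n + 1) → ℝ,
        ((k : ℕ) + 1 : ℝ≥0∞) ≤ ∑ j : Fin (n + 1), (S j).indicator (fun _ => 1) x := by
      intro x
      have hcard : (k : ℕ) + 1 ≤ #{j | cntLt x (x j) ≤ (k : ℕ)} :=
        card_rank_le x k (lt_of_lt_of_le k.isLt (Nat.le_succ n))
      have : ∑ j : Fin (n + 1), (S j).indicator (fun _ => (1 : ℝ≥0∞)) x =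
          (#{j | cntLt x (x j) ≤ (k : ℕ)} : ℝ≥0∞) := by
        rw [Finset.natCast_card_filter]
        refine Finset.sum_congr rfl fun j _ => ?_
        by_cases hj : x ∈ S j
        · simp [Set.indicator_of_mem hj, hSdef, Set.mem_setOf_eq.mp hj]
        · simp only [hSdef, Set.mem_setOf_eq] at hj
          simp [Set.indicator_of_notMem, hSdef, hj]
      rw [this]
      exact_mod_cast Nat.cast_le.2 hcard
    calc ((k : ℕ) + 1 : ℝ≥0∞) = ∫⁻ _, ((k : ℕ) + 1 : ℝ≥0∞) ∂μ := by
          simp [lintegral_const]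
      _ ≤ ∫⁻ x, ∑ j : Fin (n + 1), (S j).indicator (fun _ => 1) x ∂μ :=
          lintegral_mono hpt
      _ = ∑ j : Fin (n + 1), ∫⁻ x, (S j).indicator (fun _ => 1) x ∂μ :=
          lintegral_finset_sum _ fun j _ =>
            (measurable_const.indicator (hS j))
      _ = ∑ j : Fin (n + 1), μ (S j) := by
          refine Finset.sum_congr rfl fun j _ => ?_
          exact lintegral_indicator_one (hS j)
      _ = ∑ _j : Fin (n + 1), μ (S (Fin.last n)) :=
          Finset.sum_congr rfl fun j _ => hμS j
      _ = (n + 1 : ℝ≥0∞) * μ (S (Fin.last n)) := by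
          simp [Finset.sum_const, mul_comm]
  -- identify the target event
  have hset : {ω | g (Z ω (Fin.last n)) ≤
      orderStat (fun i : Fin n => g (Z ω i.castSucc)) k} = R ⁻¹' S (Fin.last n) := by
    ext ω
    simp only [Set.mem_setOf_eq, Set.mem_preimage, hSdef]
    rw [le_orderStat_iff_s17]
    have : cntLt (fun i : Fin n => g (Z ω i.castSucc)) (g (Z ω (Fin.last n))) =
        cntLt (R ω) (R ω (Fin.last n)) := by
      unfold cntLt
      apply Finset.card_bij (fun (i : Fin n) _ => Fin.castSucc i)
      · intro a ha
        simp only [Finset.mem_filter, Finset.mem_univ, true_and] at ha ⊢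
        exact ha
      · intro a _ b _ hab
        exact Fin.castSucc_injective n hab
      · intro b hb
        simp only [Finset.mem_filter, Finset.mem_univ, true_and] at hb
        have hbne : b ≠ Fin.last n := by
          intro h; rw [h] at hb; exact lt_irrefl _ hb
        obtain ⟨a, ha⟩ := Fin.eq_castSucc_of_ne_last hbne
        refine ⟨a, ?_, ha⟩
        simp only [Finset.mem_filter, Finset.mem_univ, true_and, ha]
        exact hb
    rw [this]
  have hPμ : P {ω | g (Z ω (Fin.last n)) ≤
      orderStat (fun i : Fin n => g (Z ω i.castSucc)) k} = μ (S (Fin.last n)) := by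
    rw [hset, hμdef, Measure.map_apply hR (hS (Fin.last n))]
  rw [hPμ]
  -- final arithmetic
  have h1α : (0 : ℝ) ≤ 1 - α := by linarith
  have hceil : (1 - α) * ((n : ℝ) + 1) ≤ (k : ℕ) + 1 := by
    have := Int.le_ceil ((1 - α) * ((n : ℝ) + 1))
    rw [← hk] at this
    exact_mod_cast this
  have hofReal : ENNReal.ofReal (1 - α) * (n + 1 : ℝ≥0∞) ≤ ((k : ℕ) + 1 : ℝ≥0∞) := by
    have : ENNReal.ofReal ((1 - α) * ((n : ℝ) + 1)) ≤
        ENNReal.ofReal ((k : ℕ) + 1 : ℝ) := ENNReal.ofReal_le_ofReal hceil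
    rw [ENNReal.ofReal_mul h1α] at this
    have h2 : ENNReal.ofReal ((n : ℝ) + 1) = (n + 1 : ℝ≥0∞) := by
      rw [ENNReal.ofReal_add (by positivity) zero_le_one]
      simp [ENNReal.ofReal_natCast]
    have h3 : ENNReal.ofReal ((k : ℕ) + 1 : ℝ) = ((k : ℕ) + 1 : ℝ≥0∞) := by
      rw [ENNReal.ofReal_add (by positivity) zero_le_one]
      simp [ENNReal.ofReal_natCast]
    rwa [h2, h3] at this
  have hfin : (n + 1 : ℝ≥0∞) * ENNReal.ofReal (1 - α) ≤
      (n + 1 : ℝ≥0∞) * μ (S (Fin.last n)) := by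
    rw [mul_comm]; exact le_trans hofReal hsum
  exact (ENNReal.mul_le_mul_iff_right (by simp) (by simp)).mp hfin
end
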